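/- arXiv:2006.06136 — 2 statements merged into one kernel-verified Lean document; each statement's English description precedes it below -/
import Mathlib

section
/- Let β* minimize the population logistic risk β ↦ E[-Y·Xβ + log(1 + exp(Xβ))] over ℝ^p, where X is a random row vector and Y ∈ {0,1} with E[Y|X] = exp(Xβ*)/(1 + exp(Xβ*)). Then for any β with |Xβ| ≤ M and |Xβ*| ≤ M almost surely, E[l(Y,X;β) - l(Y,X;β*)] ≥ s · E[(X(β - β*))^2], where s = e^M/(2(1+e^M)^2). -/
open MeasureTheory Set

lemma hasDerivAt_logexp (x : ℝ) :
    HasDerivAt (fun x => Real.log (1 + Real.exp x)) (Real.exp x / (1 + Real.exp x)) x := by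
  have h1 : HasDerivAt (fun x : ℝ => 1 + Real.exp x) (Real.exp x) x :=
    (Real.hasDerivAt_exp x).const_add 1
  simpa using h1.log (by positivity)

lemma hasDerivAt_sig (x : ℝ) :
    HasDerivAt (fun x => Real.exp x / (1 + Real.exp x)) (Real.exp x / (1 + Real.exp x) ^ 2) x := by
  have h1 := Real.hasDerivAt_exp x
  have h2 : HasDerivAt (fun x : ℝ => 1 + Real.exp x) (Real.exp x) x := h1.const_add 1
  have := h1.div h2 (by positivity)
  refine this.congr_deriv ?_
  have h3 : (0:ℝ) < 1 + Real.exp x := by positivity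
  ring

lemma sigderiv_lb {M x : ℝ} (hx : |x| ≤ M) :
    Real.exp M / (1 + Real.exp M) ^ 2 ≤ Real.exp x / (1 + Real.exp x) ^ 2 := by
  obtain ⟨hx1, hx2⟩ := abs_le.mp hx
  have hu : Real.exp x ≤ Real.exp M := Real.exp_le_exp.mpr hx2
  have huv : (1:ℝ) ≤ Real.exp x * Real.exp M := by
    rw [← Real.exp_add]
    exact Real.one_le_exp (by linarith)
  have h1 : (0:ℝ) < 1 + Real.exp x := by positivity
  have h2 : (0:ℝ) < 1 + Real.exp M := by positivity
  rw [div_le_div_iff₀ (by positivity) (by positivity)]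
  nlinarith [Real.exp_pos x, Real.exp_pos M, mul_nonneg (sub_nonneg.mpr hu) (sub_nonneg.mpr huv)]

/-- Pointwise strong-convexity inequality for the log-partition function. -/
lemma pointwise_key {M t u : ℝ} (ht : |t| ≤ M) (hu : |u| ≤ M) :
    Real.exp M / (2 * (1 + Real.exp M) ^ 2) * (u - t) ^ 2 ≤
      Real.log (1 + Real.exp u) - Real.log (1 + Real.exp t)
        - Real.exp t / (1 + Real.exp t) * (u - t) := by
  set s := Real.exp M / (2 * (1 + Real.exp M) ^ 2) with hs
  set φ : ℝ → ℝ := fun x => Real.log (1 + Real.exp x) - s * x ^ 2 with hφ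
  have hd : ∀ x, HasDerivAt φ (Real.exp x / (1 + Real.exp x) - 2 * s * x) x := by
    intro x
    have := (hasDerivAt_logexp x).sub (((hasDerivAt_pow 2 x).const_mul s))
    exact this.congr_deriv (by ring)
  have hconv : ConvexOn ℝ (Icc (-M) M) φ := by
    apply convexOn_of_hasDerivWithinAt2_nonneg (convex_Icc _ _)
      (f' := fun x => Real.exp x / (1 + Real.exp x) - 2 * s * x)
      (f'' := fun x => Real.exp x / (1 + Real.exp x) ^ 2 - 2 * s)
    · exact fun x _ => (hd x).continuousAt.continuousWithinAt
    · exact fun x _ => (hd x).hasDerivWithinAt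
    · intro x _
      have hlin : HasDerivAt (fun x : ℝ => 2 * s * x) (2 * s) x := by
        simpa using (hasDerivAt_id x).const_mul (2 * s)
      exact ((hasDerivAt_sig x).sub hlin).hasDerivWithinAt
    · intro x hx
      rw [interior_Icc] at hx
      have := sigderiv_lb (M := M) (x := x) (abs_le.mpr ⟨hx.1.le, hx.2.le⟩)
      have h2 : 2 * s = Real.exp M / (1 + Real.exp M) ^ 2 := by
        rw [hs]; field_simp
      linarith
  have htm : t ∈ Icc (-M) M := abs_le.mp ht |> fun h => ⟨h.1, h.2⟩
  have hum : u ∈ Icc (-M) M := abs_le.mp hu |> fun h => ⟨h.1, h.2⟩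
  have tangent : φ t + (Real.exp t / (1 + Real.exp t) - 2 * s * t) * (u - t) ≤ φ u := by
    rcases lt_trichotomy t u with h | h | h
    · have := hconv.le_slope_of_hasDerivAt htm hum h (hd t)
      rw [slope_def_field] at this
      have h' : 0 < u - t := by linarith
      have h2 := (le_div_iff₀ h').mp this
      nlinarith [h2]
    · simp [h]
    · have := hconv.slope_le_of_hasDerivAt hum htm h (hd t)
      rw [slope_def_field] at this
      have h' : 0 < t - u := by linarith
      have h2 := (div_le_iff₀ h').mp this
      nlinarith [h2]
  have := tangent
  simp only [hφ] at this
  nlinarith [this]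

/-- The logistic loss `l(Y, X; b) = -Y·Xb + log(1 + exp(Xb))`. -/
noncomputable def logLoss {p : ℕ} (X : Fin p → ℝ) (Y : ℝ) (b : Fin p → ℝ) : ℝ :=
  -Y * (∑ j, X j * b j) + Real.log (1 + Real.exp (∑ j, X j * b j))

/-- Strong convexity of the population logistic risk at the minimizer `β*`: if
`E[Y|X] = e^{Xβ*}/(1+e^{Xβ*})` and the predictors `Xβ`, `Xβ*` are a.s. bounded by `M`,
then `E[l(Y,X;β) - l(Y,X;β*)] ≥ s·E[(X(β-β*))²]` with `s = e^M/(2(1+e^M)²)`. -/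
theorem population_risk_strong_convexity {Ω : Type*} [MeasurableSpace Ω]
    (μ : Measure Ω) [IsProbabilityMeasure μ] {p : ℕ}
    (X : Ω → Fin p → ℝ) (Y : Ω → ℝ) (hXmeas : Measurable X) (hYmeas : Measurable Y)
    (hY01 : ∀ ω, Y ω = 0 ∨ Y ω = 1) (hYint : Integrable Y μ)
    (β βs : Fin p → ℝ) (M : ℝ) (hM : 0 < M)
    (hmin : ∀ b : Fin p → ℝ, ∫ ω, logLoss (X ω) (Y ω) βs ∂μ ≤ ∫ ω, logLoss (X ω) (Y ω) b ∂μ)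
    (hcond : μ[Y | MeasurableSpace.comap X inferInstance]
      =ᵐ[μ] fun ω => Real.exp (∑ j, X ω j * βs j) / (1 + Real.exp (∑ j, X ω j * βs j)))
    (hbound : ∀ᵐ ω ∂μ, |∑ j, X ω j * β j| ≤ M ∧ |∑ j, X ω j * βs j| ≤ M)
    (hint1 : Integrable (fun ω => logLoss (X ω) (Y ω) β) μ)
    (hint2 : Integrable (fun ω => logLoss (X ω) (Y ω) βs) μ)
    (hint3 : Integrable (fun ω => ((∑ j, X ω j * β j) - ∑ j, X ω j * βs j) ^ 2) μ) :
    ∫ ω, (logLoss (X ω) (Y ω) β - logLoss (X ω) (Y ω) βs) ∂μ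
      ≥ (Real.exp M / (2 * (1 + Real.exp M) ^ 2))
        * ∫ ω, ((∑ j, X ω j * β j) - ∑ j, X ω j * βs j) ^ 2 ∂μ := by
  have hm : MeasurableSpace.comap X inferInstance ≤ ‹MeasurableSpace Ω› :=
    measurable_iff_comap_le.mp hXmeas
  have hXm : Measurable[MeasurableSpace.comap X inferInstance] X := fun s hs => ⟨s, hs, rfl⟩
  have hfm : ∀ b : Fin p → ℝ, Measurable (fun v : Fin p → ℝ => ∑ j, v j * b j) := by
    intro b; exact Finset.measurable_sum _ fun j _ => (measurable_pi_apply j).mul_const _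
  set Δ : Ω → ℝ := fun ω => (∑ j, X ω j * β j) - ∑ j, X ω j * βs j with hΔ
  have hΔm : Measurable[MeasurableSpace.comap X inferInstance] Δ :=
    ((hfm β).comp hXm).sub ((hfm βs).comp hXm)
  have hΔmeas : Measurable Δ := hΔm.mono hm le_rfl
  have htmeas : Measurable (fun ω => ∑ j, X ω j * βs j) := (hfm βs).comp hXmeas
  have hYb : ∀ ω, |Y ω| ≤ 1 := by
    intro ω; rcases hY01 ω with h | h <;> simp [h]
  have hΔbd : ∀ᵐ ω ∂μ, |Δ ω| ≤ |M| + |M| := by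
    filter_upwards [hbound] with ω ⟨h1, h2⟩
    have h3 := le_abs_self M
    calc |Δ ω| ≤ |∑ j, X ω j * β j| + |∑ j, X ω j * βs j| := abs_sub _ _
      _ ≤ |M| + |M| := by linarith
  have hΔb : ∀ᵐ ω ∂μ, ‖Δ ω * Y ω‖ ≤ |M| + |M| := by
    filter_upwards [hΔbd] with ω h1
    rw [Real.norm_eq_abs, abs_mul]
    calc |Δ ω| * |Y ω| ≤ (|M| + |M|) * 1 :=
          mul_le_mul h1 (hYb ω) (abs_nonneg _) (by positivity)
      _ = |M| + |M| := mul_one _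
  have hYΔint : Integrable (Δ * Y) μ :=
    Integrable.mono' (integrable_const (|M| + |M|))
      ((hΔmeas.mul hYmeas).aestronglyMeasurable) hΔb
  -- the conditional-expectation step
  have hpull := condExp_mul_of_stronglyMeasurable_left (μ := μ) hΔm.stronglyMeasurable hYΔint hYint
  have hcondstep : ∫ ω, Δ ω * Y ω ∂μ
      = ∫ ω, Δ ω * (Real.exp (∑ j, X ω j * βs j) / (1 + Real.exp (∑ j, X ω j * βs j))) ∂μ := by
    calc ∫ ω, Δ ω * Y ω ∂μ = ∫ ω, (Δ * Y) ω ∂μ := rfl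
      _ = ∫ ω, (μ[Δ * Y | MeasurableSpace.comap X inferInstance]) ω ∂μ :=
          (integral_condExp hm).symm
      _ = ∫ ω, Δ ω * (μ[Y | MeasurableSpace.comap X inferInstance]) ω ∂μ := by
          refine integral_congr_ae ?_
          filter_upwards [hpull] with ω hω
          exact hω
      _ = _ := by
          refine integral_congr_ae ?_
          filter_upwards [hcond] with ω hω
          rw [hω]
  -- abbreviations
  set σt : Ω → ℝ := fun ω =>
    Real.exp (∑ j, X ω j * βs j) / (1 + Real.exp (∑ j, X ω j * βs j)) with hσt
  have hσmeas : Measurable σt :=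
    (Real.measurable_exp.comp htmeas).div (measurable_const.add (Real.measurable_exp.comp htmeas))
  have hσbd : ∀ ω, |σt ω| ≤ 1 := by
    intro ω
    have h1 : (0:ℝ) < 1 + Real.exp (∑ j, X ω j * βs j) := by positivity
    rw [abs_of_nonneg (by positivity)]
    rw [div_le_one h1]
    linarith
  have hσΔint : Integrable (fun ω => Δ ω * σt ω) μ := by
    refine Integrable.mono' (integrable_const (|M| + |M|)) ((hΔmeas.mul hσmeas).aestronglyMeasurable) ?_
    filter_upwards [hΔbd] with ω h1
    rw [Real.norm_eq_abs, abs_mul]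
    calc |Δ ω| * |σt ω| ≤ (|M| + |M|) * 1 :=
          mul_le_mul h1 (hσbd ω) (abs_nonneg _) (by positivity)
      _ = |M| + |M| := mul_one _
  -- pointwise decomposition of the loss difference
  have hDeq : ∀ ω, logLoss (X ω) (Y ω) β - logLoss (X ω) (Y ω) βs
      = (Real.log (1 + Real.exp (∑ j, X ω j * β j))
          - Real.log (1 + Real.exp (∑ j, X ω j * βs j))) - Δ ω * Y ω := by
    intro ω; simp only [logLoss, hΔ]; ring
  set G : Ω → ℝ := fun ω => Real.log (1 + Real.exp (∑ j, X ω j * β j))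
      - Real.log (1 + Real.exp (∑ j, X ω j * βs j)) with hG
  have hGint : Integrable G μ := by
    have h := (hint1.sub hint2).add hYΔint
    refine h.congr (Filter.Eventually.of_forall fun ω => ?_)
    simp only [Pi.add_apply, Pi.sub_apply, Pi.mul_apply, hG]
    rw [hDeq ω]; ring
  have hstep1 : ∫ ω, (logLoss (X ω) (Y ω) β - logLoss (X ω) (Y ω) βs) ∂μ
      = ∫ ω, (G ω - Δ ω * σt ω) ∂μ := by
    calc ∫ ω, (logLoss (X ω) (Y ω) β - logLoss (X ω) (Y ω) βs) ∂μ
        = ∫ ω, (G ω - Δ ω * Y ω) ∂μ := by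
          exact integral_congr_ae (Filter.Eventually.of_forall fun ω => hDeq ω)
      _ = ∫ ω, G ω ∂μ - ∫ ω, Δ ω * Y ω ∂μ := integral_sub hGint (by exact hYΔint)
      _ = ∫ ω, G ω ∂μ - ∫ ω, Δ ω * σt ω ∂μ := by rw [hcondstep]
      _ = ∫ ω, (G ω - Δ ω * σt ω) ∂μ := (integral_sub hGint hσΔint).symm
  rw [ge_iff_le, hstep1]
  have hsint : Integrable (fun ω => Real.exp M / (2 * (1 + Real.exp M) ^ 2) * Δ ω ^ 2) μ :=
    hint3.const_mul _
  calc Real.exp M / (2 * (1 + Real.exp M) ^ 2) * ∫ ω, Δ ω ^ 2 ∂μ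
      = ∫ ω, Real.exp M / (2 * (1 + Real.exp M) ^ 2) * Δ ω ^ 2 ∂μ :=
        (integral_const_mul _ _).symm
    _ ≤ ∫ ω, (G ω - Δ ω * σt ω) ∂μ := by
        refine integral_mono_ae hsint (hGint.sub hσΔint) ?_
        filter_upwards [hbound] with ω ⟨h1, h2⟩
        have := pointwise_key (M := M) (t := ∑ j, X ω j * βs j) (u := ∑ j, X ω j * β j) h2 h1
        simp only [hG, hσt, hΔ]
        nlinarith [this]
end

section
/- Let f: Aⁿ → ℝ satisfy the bounded difference condition with constants c_k: changing the k-th coordinate changes f by at most c_k. If X_1,…,X_n are independent A-valued random variables, then for all t > 0, P(|f(X_1,…,X_n) - E f(X_1,…,X_n)| ≥ t) ≤ 2·exp(-2t²/∑_{i=1}^n c_i²). -/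
open MeasureTheory ProbabilityTheory

/-- Core scalar inequality for Hoeffding's lemma. -/
lemma mcd_key_ineq (p : ℝ) (hp0 : 0 ≤ p) (hp1 : p ≤ 1) (h : ℝ) :
    1 - p + p * Real.exp h ≤ Real.exp (p * h + h ^ 2 / 8) := by
  set D : ℝ → ℝ := fun x => 1 - p + p * Real.exp x with hDdef
  have hD : ∀ x, 0 < D x := by
    intro x
    rcases lt_or_eq_of_le hp1 with h1 | h1
    · have : 0 ≤ p * Real.exp x := mul_nonneg hp0 (Real.exp_pos x).le
      simp only [hDdef]; nlinarith
    · simp only [hDdef, h1]; norm_num [Real.exp_pos]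
  set q : ℝ → ℝ := fun x => p * Real.exp x / D x with hqdef
  have hDq : ∀ x, HasDerivAt D (p * Real.exp x) x := by
    intro x
    exact ((hasDerivAt_const x (1 - p)).add ((Real.hasDerivAt_exp x).const_mul p)).congr_deriv (by simp)
  have hq0 : ∀ x, 0 ≤ q x := fun x =>
    div_nonneg (mul_nonneg hp0 (Real.exp_pos x).le) (hD x).le
  have hq1 : ∀ x, q x ≤ 1 := by
    intro x
    rw [hqdef, div_le_one (hD x)]
    simp only [hDdef]; nlinarith [Real.exp_pos x]
  have hq : ∀ x, HasDerivAt q (q x * (1 - q x)) x := by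
    intro x
    have := (((Real.hasDerivAt_exp x).const_mul p).div (hDq x) (hD x).ne')
    refine this.congr_deriv ?_
    have hD' := (hD x).ne'
    simp only [hqdef]
    field_simp
  -- G' x := q x - p - x/4, G x := log (D x) - p*x - x^2/8
  set G' : ℝ → ℝ := fun x => q x - p - x / 4 with hG'def
  set G : ℝ → ℝ := fun x => Real.log (D x) - p * x - x ^ 2 / 8 with hGdef
  have hGd : ∀ x, HasDerivAt G (G' x) x := by
    intro x
    have h1 : HasDerivAt (fun x => Real.log (D x)) (q x) x := by
      simpa [hqdef] using (hDq x).log (hD x).ne'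
    have h2 : HasDerivAt (fun x : ℝ => p * x) p x := by
      simpa using (hasDerivAt_id x).const_mul p
    have h3 : HasDerivAt (fun x : ℝ => x ^ 2 / 8) (x / 4) x := by
      have := (hasDerivAt_pow 2 x).div_const 8
      exact this.congr_deriv (by ring)
    exact (h1.sub h2).sub h3
  have hG'd : ∀ x, HasDerivAt G' (q x * (1 - q x) - 1 / 4) x := by
    intro x
    have h3 : HasDerivAt (fun x : ℝ => x / 4) (1 / 4) x := by
      simpa using (hasDerivAt_id x).div_const 4
    exact (((hq x).sub (hasDerivAt_const x p)).sub h3).congr_deriv (by simp)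
  have hG'anti : Antitone G' := by
    refine antitone_of_hasDerivAt_nonpos hG'd ?_
    intro x
    have := hq0 x; have := hq1 x
    simp only [Pi.zero_apply]
    nlinarith [sq_nonneg (q x - 1/2)]
  have hG'0 : G' 0 = 0 := by
    simp [hG'def, hqdef, hDdef]
  have hG0 : G 0 = 0 := by simp [hGdef, hDdef]
  have hGle : ∀ x, G x ≤ 0 := by
    intro x
    rcases le_total 0 x with hx | hx
    · have hanti : AntitoneOn G (Set.Ici 0) := by
        refine antitoneOn_of_hasDerivWithinAt_nonpos (convex_Ici 0)
          (fun y _ => (hGd y).continuousAt.continuousWithinAt)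
          (fun y hy => (hGd y).hasDerivWithinAt) ?_
        intro y hy
        rw [interior_Ici] at hy
        have : G' y ≤ G' 0 := hG'anti (le_of_lt hy)
        linarith [hG'0 ▸ this]
      have := hanti (Set.self_mem_Ici) hx hx
      linarith [hG0 ▸ this]
    · have hmono : MonotoneOn G (Set.Iic 0) := by
        refine monotoneOn_of_hasDerivWithinAt_nonneg (convex_Iic 0)
          (fun y _ => (hGd y).continuousAt.continuousWithinAt)
          (fun y hy => (hGd y).hasDerivWithinAt) ?_
        intro y hy
        rw [interior_Iic] at hy
        have : G' 0 ≤ G' y := hG'anti (le_of_lt hy)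
        linarith [hG'0 ▸ this]
      have := hmono hx (Set.self_mem_Iic) hx
      linarith [hG0 ▸ this]
  have := hGle h
  have hlog : Real.log (D h) ≤ p * h + h ^ 2 / 8 := by
    simp only [hGdef] at this; linarith
  calc D h = Real.exp (Real.log (D h)) := (Real.exp_log (hD h)).symm
    _ ≤ Real.exp (p * h + h ^ 2 / 8) := Real.exp_le_exp.mpr hlog

/-- Integrability of a bounded measurable function w.r.t. a finite measure. -/
lemma mcd_integrable {α : Type*} [MeasurableSpace α] (μ : Measure α) [IsFiniteMeasure μ]
    {g : α → ℝ} (hg : Measurable g) {C : ℝ} (hC : ∀ x, |g x| ≤ C) : Integrable g μ :=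
  ⟨hg.aestronglyMeasurable, HasFiniteIntegral.of_bounded (C := C) (ae_of_all μ hC)⟩

/-- Hoeffding's lemma. -/
lemma mcd_hoeffding {α : Type*} [MeasurableSpace α] (μ : Measure α) [IsProbabilityMeasure μ]
    (Y : α → ℝ) (hY : Measurable Y) (a b : ℝ) (hab : ∀ ω, Y ω ∈ Set.Icc a b)
    (hmean : ∫ ω, Y ω ∂μ = 0) (s : ℝ) :
    ∫ ω, Real.exp (s * Y ω) ∂μ ≤ Real.exp (s ^ 2 * (b - a) ^ 2 / 8) := by
  have hne : Nonempty α := Measure.nonempty_of_neZero μ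
  have hYint : Integrable Y μ := by
    refine mcd_integrable μ hY (C := max |a| |b|) fun x => ?_
    rcases hab x with ⟨h1, h2⟩
    rw [abs_le]
    exact ⟨le_trans (neg_le_neg (le_max_left |a| |b|)) (le_trans (neg_abs_le a) h1),
      le_trans h2 (le_trans (le_abs_self b) (le_max_right |a| |b|))⟩
  have hle : a ≤ b := le_trans (hab (Classical.arbitrary _)).1 (hab (Classical.arbitrary _)).2
  have ha0 : a ≤ 0 := by
    have : ∫ ω, Y ω ∂μ ≥ ∫ _, a ∂μ :=
      integral_mono (integrable_const a) hYint fun ω => (hab ω).1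
    simpa [hmean] using this
  have hb0 : 0 ≤ b := by
    have : ∫ ω, Y ω ∂μ ≤ ∫ _, b ∂μ :=
      integral_mono hYint (integrable_const b) fun ω => (hab ω).2
    simpa [hmean] using this
  rcases eq_or_lt_of_le hle with heq | hlt
  · -- a = b forces Y ≡ 0
    have ha : a = 0 := le_antisymm ha0 (heq ▸ hb0)
    have hYzero : ∀ ω, Y ω = 0 := fun ω =>
      le_antisymm (ha ▸ heq ▸ (hab ω).2) (ha ▸ (hab ω).1)
    simp only [hYzero, mul_zero, Real.exp_zero, integral_const, measure_univ,
      ENNReal.toReal_one, probReal_univ, smul_eq_mul, one_mul]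
    exact Real.one_le_exp (by positivity)
  · have hba : 0 < b - a := sub_pos.mpr hlt
    set p : ℝ := -a / (b - a) with hpdef
    have hp0 : 0 ≤ p := div_nonneg (neg_nonneg.mpr ha0) hba.le
    have hp1 : p ≤ 1 := by
      rw [hpdef, div_le_one hba]; linarith
    -- pointwise convexity bound
    have hpt : ∀ ω, Real.exp (s * Y ω) ≤
        (b - Y ω) / (b - a) * Real.exp (s * a) + (Y ω - a) / (b - a) * Real.exp (s * b) := by
      intro ω
      rcases hab ω with ⟨h1, h2⟩
      have hθ0 : 0 ≤ (b - Y ω) / (b - a) := div_nonneg (by linarith) hba.le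
      have hθ0' : 0 ≤ (Y ω - a) / (b - a) := div_nonneg (by linarith) hba.le
      have hθ1 : (b - Y ω) / (b - a) + (Y ω - a) / (b - a) = 1 := by
        field_simp
        ring
      have hcomb : (b - Y ω) / (b - a) * (s * a) + (Y ω - a) / (b - a) * (s * b) = s * Y ω := by
        rw [div_mul_eq_mul_div, div_mul_eq_mul_div, ← add_div, eq_comm,
          eq_div_iff hba.ne']
        ring
      have := convexOn_exp.2 (Set.mem_univ (s * a)) (Set.mem_univ (s * b)) hθ0 hθ0' hθ1
      simp only [smul_eq_mul] at this
      rw [hcomb] at this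
      exact this
    -- integrate
    have hint : Integrable (fun ω => Real.exp (s * Y ω)) μ := by
      refine mcd_integrable μ (by fun_prop) (C := Real.exp (|s| * max |a| |b|)) fun x => ?_
      rw [abs_of_pos (Real.exp_pos _)]
      apply Real.exp_le_exp.mpr
      calc s * Y x ≤ |s * Y x| := le_abs_self _
        _ = |s| * |Y x| := abs_mul s (Y x)
        _ ≤ |s| * max |a| |b| := by
            refine mul_le_mul_of_nonneg_left ?_ (abs_nonneg s)
            rcases hab x with ⟨h1, h2⟩
            rw [abs_le]
            exact ⟨le_trans (neg_le_neg (le_max_left |a| |b|)) (le_trans (neg_abs_le a) h1),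
              le_trans h2 (le_trans (le_abs_self b) (le_max_right |a| |b|))⟩
    have hRint : Integrable (fun ω =>
        (b - Y ω) / (b - a) * Real.exp (s * a) + (Y ω - a) / (b - a) * Real.exp (s * b)) μ := by
      apply Integrable.add
      · exact ((((integrable_const b).sub hYint).div_const _).mul_const _)
      · exact (((hYint.sub (integrable_const a)).div_const _).mul_const _)
    have hIle := integral_mono hint hRint hpt
    set A := Real.exp (s * a) with hA
    set B := Real.exp (s * b) with hB
    have hIR : ∫ ω, ((b - Y ω) / (b - a) * A + (Y ω - a) / (b - a) * B) ∂μ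
        = (1 - p) * A + p * B := by
      have hfun : (fun ω => (b - Y ω) / (b - a) * A + (Y ω - a) / (b - a) * B)
          = fun ω => (b * A - a * B) / (b - a) + Y ω * ((B - A) / (b - a)) := by
        funext ω
        field_simp
        ring
      rw [hfun, integral_add (integrable_const _) (hYint.mul_const _),
        integral_mul_const, hmean, integral_const]
      simp only [measure_univ, ENNReal.toReal_one, probReal_univ, smul_eq_mul, one_mul, zero_mul, add_zero]
      rw [hpdef]
      field_simp
      ring
    -- apply scalar inequality with h = s * (b - a)
    have hkey := mcd_key_ineq p hp0 hp1 (s * (b - a))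
    have hexpand : (1 - p) * A + p * B = A * (1 - p + p * Real.exp (s * (b - a))) := by
      have hx : B = A * Real.exp (s * (b - a)) := by
        rw [hA, hB, ← Real.exp_add]
        congr 1
        ring
      rw [hx]
      ring
    have hfinal : A * Real.exp (p * (s * (b - a)) + (s * (b - a)) ^ 2 / 8)
        = Real.exp (s ^ 2 * (b - a) ^ 2 / 8) := by
      rw [hA, ← Real.exp_add]
      congr 1
      rw [hpdef]
      field_simp
      ring
    calc ∫ ω, Real.exp (s * Y ω) ∂μ
        ≤ (1 - p) * A + p * B := hIR ▸ hIle
      _ = A * (1 - p + p * Real.exp (s * (b - a))) := hexpand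
      _ ≤ A * Real.exp (p * (s * (b - a)) + (s * (b - a)) ^ 2 / 8) :=
          mul_le_mul_of_nonneg_left hkey (Real.exp_pos _).le
      _ = Real.exp (s ^ 2 * (b - a) ^ 2 / 8) := hfinal

/-- Telescoping: bounded differences imply a global bound on oscillation. -/
lemma mcd_bdd {A : Type*} {n : ℕ} (f : (Fin n → A) → ℝ) (c : Fin n → ℝ)
    (hbd : ∀ (k : Fin n) (x : Fin n → A) (x' : A),
      |f x - f (Function.update x k x')| ≤ c k) (x y : Fin n → A) :
    |f x - f y| ≤ ∑ i, c i := by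
  classical
  set z : ℕ → (Fin n → A) := fun i j => if (j : ℕ) < i then y j else x j with hz
  have hz0 : z 0 = x := by funext j; simp [hz]
  have hzn : z n = y := by funext j; simp [hz, j.isLt]
  set c' : ℕ → ℝ := fun i => if h : i < n then c ⟨i, h⟩ else 0 with hc'
  have hstep : ∀ m : ℕ, |f (z (m + 1)) - f (z m)| ≤ c' m := by
    intro m
    by_cases hm : m < n
    · have hupd : z (m + 1) = Function.update (z m) ⟨m, hm⟩ (y ⟨m, hm⟩) := by
        funext j
        rcases eq_or_ne j ⟨m, hm⟩ with rfl | hne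
        · simp [hz, Function.update_self]
        · have hjm : (j : ℕ) ≠ m := fun h => hne (Fin.ext h)
          have : ((j : ℕ) < m + 1) ↔ ((j : ℕ) < m) := by omega
          simp [hz, Function.update_of_ne hne, this]
      rw [hupd, abs_sub_comm]
      have := hbd ⟨m, hm⟩ (z m) (y ⟨m, hm⟩)
      simpa [hc', hm] using this
    · have : z (m + 1) = z m := by
        funext j
        have hj : (j : ℕ) < n := j.isLt
        have h1 : (j : ℕ) < m + 1 := by omega
        have h2 : (j : ℕ) < m := by omega
        simp [hz, h1, h2]
      simp [this, hc', hm]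
  have htel : ∀ m : ℕ, |f (z m) - f x| ≤ ∑ i ∈ Finset.range m, c' i := by
    intro m
    induction m with
    | zero => simp [hz0]
    | succ k ih =>
        calc |f (z (k + 1)) - f x|
            ≤ |f (z (k + 1)) - f (z k)| + |f (z k) - f x| := abs_sub_le _ _ _
          _ ≤ c' k + ∑ i ∈ Finset.range k, c' i := add_le_add (hstep k) ih
          _ = ∑ i ∈ Finset.range (k + 1), c' i := by
              rw [Finset.sum_range_succ]; ring
  have := htel n
  rw [hzn] at this
  have hsum : ∑ i ∈ Finset.range n, c' i = ∑ i, c i := by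
    rw [Finset.sum_range fun i => c' i]
    exact Finset.sum_congr rfl fun i _ => by simp [hc', i.isLt]
  rw [abs_sub_comm]
  rw [hsum] at this
  exact this

lemma mcd_abs_int {α : Type*} [MeasurableSpace α] (μ : Measure α) (h : α → ℝ) :
    |∫ x, h x ∂μ| ≤ ∫ x, |h x| ∂μ := by
  simpa [Real.norm_eq_abs] using norm_integral_le_integral_norm (μ := μ) h

lemma mcd_exp_bound {s C u : ℝ} (hu : |u| ≤ C) : |Real.exp (s * u)| ≤ Real.exp (|s| * C) := by
  rw [abs_of_pos (Real.exp_pos _)]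
  apply Real.exp_le_exp.mpr
  calc s * u ≤ |s * u| := le_abs_self _
    _ = |s| * |u| := abs_mul s u
    _ ≤ |s| * C := mul_le_mul_of_nonneg_left hu (abs_nonneg s)

set_option maxHeartbeats 1000000 in
/-- The MGF bound, by induction on the number of coordinates. -/
lemma mcd_mgf {A : Type*} [MeasurableSpace A] :
    ∀ (n : ℕ) (μ : Fin n → Measure A), (∀ i, IsProbabilityMeasure (μ i)) →
    ∀ (f : (Fin n → A) → ℝ), Measurable f → ∀ (c : Fin n → ℝ),
    (∀ (k : Fin n) (x : Fin n → A) (x' : A),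
      |f x - f (Function.update x k x')| ≤ c k) →
    ∀ s : ℝ,
    ∫ x, Real.exp (s * (f x - ∫ y, f y ∂(Measure.pi μ))) ∂(Measure.pi μ)
      ≤ Real.exp (s ^ 2 * (∑ i, c i ^ 2) / 8) := by
  intro n
  induction n with
  | zero =>
      intro μ hμ f hf c hbd s
      haveI := hμ
      haveI : IsProbabilityMeasure (Measure.pi μ) := inferInstance
      have hconst : ∀ x y : Fin 0 → A, x = y := fun x y => Subsingleton.elim x y
      have hfx : ∀ x, f x = f (fun i => i.elim0) := fun x => by rw [hconst x fun i => i.elim0]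
      have : ∀ x : Fin 0 → A, f x - ∫ y, f y ∂(Measure.pi μ) = 0 := by
        intro x
        have : ∫ y, f y ∂(Measure.pi μ) = f (fun i => i.elim0) := by
          rw [show f = fun _ => f (fun i => i.elim0) from funext hfx]
          simp
        rw [this, hfx x, sub_self]
      simp only [this, mul_zero, Real.exp_zero, integral_const, measure_univ,
        ENNReal.toReal_one, probReal_univ, smul_eq_mul, one_mul]
      simp
  | succ n IH =>
      intro μ hμ f hf c hbd s
      haveI := hμ
      haveI : IsProbabilityMeasure (Measure.pi μ) := inferInstance
      -- the product decomposition
      set ν0 : Measure A := μ 0 with hν0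
      set νs : Measure (Fin n → A) := Measure.pi (fun j => μ j.succ) with hνs
      haveI : IsProbabilityMeasure νs := inferInstance
      set e := MeasurableEquiv.piFinSuccAbove (fun _ : Fin (n + 1) => A) 0 with he
      have hMP : MeasurePreserving e (Measure.pi μ) (ν0.prod νs) := by
        have := measurePreserving_piFinSuccAbove μ 0
        simpa [Fin.succAbove_zero, hν0, hνs, he] using this
      have hsymm : ∀ z : A × (Fin n → A), e.symm z = Fin.cons z.1 z.2 := by
        intro z
        rw [he, MeasurableEquiv.piFinSuccAbove_symm_apply]
        simp [Fin.insertNthEquiv, Fin.insertNth_zero']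
      -- transported function
      set G : A × (Fin n → A) → ℝ := fun z => f (Fin.cons z.1 z.2) with hG
      have hGmeas : Measurable G := by
        apply hf.comp
        apply measurable_pi_iff.2
        intro j
        refine Fin.cases ?_ ?_ j
        · simpa using measurable_fst
        · intro i
          simpa [Function.comp_def] using (measurable_pi_apply i).comp measurable_snd
      -- global bound on f
      have hne : Nonempty (Fin (n + 1) → A) :=
        Measure.nonempty_of_neZero (Measure.pi μ)
      obtain ⟨x₀⟩ := hne
      have hneA : Nonempty A := ⟨x₀ 0⟩
      set B : ℝ := |f x₀| + ∑ i, c i with hB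
      have hfB : ∀ x, |f x| ≤ B := by
        intro x
        calc |f x| ≤ |f x₀| + |f x - f x₀| := by
              have := abs_add_le (f x₀) (f x - f x₀); simpa using this
          _ ≤ B := by rw [hB]; exact add_le_add_right (mcd_bdd f c hbd x x₀) _
      have hGB : ∀ z, |G z| ≤ B := fun z => hfB _
      -- integral transport
      have hint_transport : ∀ (g : (Fin (n + 1) → A) → ℝ),
          ∫ x, g x ∂(Measure.pi μ) = ∫ z, g (Fin.cons z.1 z.2) ∂(ν0.prod νs) := by
        intro g
        rw [← (MeasurePreserving.symm e hMP).integral_comp']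
        exact integral_congr_ae (ae_of_all _ fun z => by simp only [hsymm])
      set m : ℝ := ∫ x, f x ∂(Measure.pi μ) with hm
      have hmB : |m| ≤ B := by
        rw [hm]
        calc |∫ x, f x ∂(Measure.pi μ)| ≤ ∫ x, |f x| ∂(Measure.pi μ) :=
              mcd_abs_int _ _
          _ ≤ ∫ _, B ∂(Measure.pi μ) := integral_mono
              ((mcd_integrable _ hf hfB).abs) (integrable_const B) hfB
          _ = B := by simp
      -- conditional mean in the first variable
      set g : (Fin n → A) → ℝ := fun x' => ∫ y, G (y, x') ∂ν0 with hg
      have hgmeas : Measurable g := by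
        have := hGmeas.stronglyMeasurable.integral_prod_left' (μ := ν0)
        exact this.measurable
      have hgB : ∀ x', |g x'| ≤ B := by
        intro x'
        have hmeasy : Measurable fun y => G (y, x') :=
          hGmeas.comp (measurable_id.prodMk measurable_const)
        calc |∫ y, G (y, x') ∂ν0| ≤ ∫ y, |G (y, x')| ∂ν0 := mcd_abs_int _ _
          _ ≤ ∫ _, B ∂ν0 := integral_mono ((mcd_integrable _ hmeasy fun y => hGB _).abs)
              (integrable_const B) fun y => hGB _
          _ = B := by simp
      -- Fubini facts
      have hGint : Integrable G (ν0.prod νs) := mcd_integrable _ hGmeas hGB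
      have hmg : m = ∫ x', g x' ∂νs := by
        rw [hm, hint_transport f, ← hG, integral_prod_symm G hGint]
      -- main expression, rewritten via the product
      have hEint : Integrable (fun z => Real.exp (s * (G z - m))) (ν0.prod νs) := by
        refine mcd_integrable _ (by fun_prop) (C := Real.exp (|s| * (B + B))) fun z => ?_
        refine mcd_exp_bound ?_
        calc |G z - m| ≤ |G z| + |m| := abs_sub _ _
          _ ≤ B + B := add_le_add (hGB z) hmB
      have hmain : ∫ x, Real.exp (s * (f x - m)) ∂(Measure.pi μ)
          = ∫ x', ∫ y, Real.exp (s * (G (y, x') - m)) ∂ν0 ∂νs := by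
        rw [hint_transport (fun x => Real.exp (s * (f x - m)))]
        exact integral_prod_symm _ hEint
      -- inner integral bound via Hoeffding
      have hinner : ∀ x', ∫ y, Real.exp (s * (G (y, x') - m)) ∂ν0
          ≤ Real.exp (s * (g x' - m)) * Real.exp (s ^ 2 * (c 0) ^ 2 / 8) := by
        intro x'
        have hmeasy : Measurable fun y => G (y, x') :=
          hGmeas.comp (measurable_id.prodMk measurable_const)
        -- the centered variable
        set Y : A → ℝ := fun y => G (y, x') - g x' with hY
        have hYmeas : Measurable Y := hmeasy.sub measurable_const
        have hYpair : ∀ y y' : A, |G (y, x') - G (y', x')| ≤ c 0 := by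
          intro y y'
          have := hbd 0 (Fin.cons y' x') y
          rwa [Fin.update_cons_zero, abs_sub_comm] at this
        set R : Set ℝ := Set.range (fun y => G (y, x')) with hR
        have hRne : R.Nonempty := Set.range_nonempty _
        have hRbdd : BddBelow R := by
          obtain ⟨y₀⟩ := hneA
          refine ⟨G (y₀, x') - c 0, ?_⟩
          rintro r ⟨y, rfl⟩
          have := hYpair y₀ y
          have := abs_le.1 this
          linarith [this.1]
        set a : ℝ := sInf R - g x' with ha
        set b : ℝ := a + c 0 with hb
        have hab : ∀ y, Y y ∈ Set.Icc a b := by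
          intro y
          constructor
          · have : sInf R ≤ G (y, x') := csInf_le hRbdd ⟨y, rfl⟩
            rw [hY, ha]; simp only []; linarith
          · have hlb : G (y, x') - c 0 ≤ sInf R := by
              apply le_csInf hRne
              rintro r ⟨y', rfl⟩
              have := abs_le.1 (hYpair y y')
              linarith [this.1]
            rw [hY, hb, ha]; simp only []; linarith
        have hYint : Integrable (fun y => G (y, x')) ν0 :=
          mcd_integrable _ hmeasy fun y => hGB _
        have hmean : ∫ y, Y y ∂ν0 = 0 := by
          rw [hY]
          rw [integral_sub hYint (integrable_const _)]
          simp [hg]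
        have hhoef := mcd_hoeffding ν0 Y hYmeas a b hab hmean s
        have hba : (b - a) ^ 2 = (c 0) ^ 2 := by rw [hb]; ring_nf
        rw [hba] at hhoef
        have hsplit : ∀ y, Real.exp (s * (G (y, x') - m))
            = Real.exp (s * (g x' - m)) * Real.exp (s * Y y) := by
          intro y
          rw [← Real.exp_add, hY]
          congr 1
          ring
        calc ∫ y, Real.exp (s * (G (y, x') - m)) ∂ν0
            = ∫ y, Real.exp (s * (g x' - m)) * Real.exp (s * Y y) ∂ν0 := by
              exact integral_congr_ae (ae_of_all _ hsplit)
          _ = Real.exp (s * (g x' - m)) * ∫ y, Real.exp (s * Y y) ∂ν0 := integral_const_mul _ _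
          _ ≤ Real.exp (s * (g x' - m)) * Real.exp (s ^ 2 * (c 0) ^ 2 / 8) :=
              mul_le_mul_of_nonneg_left hhoef (Real.exp_pos _).le
      -- outer integral: apply IH to g
      have hgbd : ∀ (k : Fin n) (x' : Fin n → A) (a : A),
          |g x' - g (Function.update x' k a)| ≤ c k.succ := by
        intro k x' a
        have hmeasy : Measurable fun y => G (y, x') :=
          hGmeas.comp (measurable_id.prodMk measurable_const)
        have hmeasy' : Measurable fun y => G (y, Function.update x' k a) :=
          hGmeas.comp (measurable_id.prodMk measurable_const)
        have hptbd : ∀ y, |G (y, x') - G (y, Function.update x' k a)| ≤ c k.succ := by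
          intro y
          have := hbd k.succ (Fin.cons y x') a
          rwa [← Fin.cons_update] at this
        rw [hg]
        simp only []
        rw [← integral_sub (mcd_integrable _ hmeasy fun y => hGB _)
          (mcd_integrable _ hmeasy' fun y => hGB _)]
        calc |∫ y, (G (y, x') - G (y, Function.update x' k a)) ∂ν0|
            ≤ ∫ y, |G (y, x') - G (y, Function.update x' k a)| ∂ν0 :=
              mcd_abs_int _ _
          _ ≤ ∫ _, c k.succ ∂ν0 := integral_mono
              ((mcd_integrable _ (hmeasy.sub hmeasy') fun y => by
                calc |G (y, x') - G (y, Function.update x' k a)|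
                    ≤ |G (y, x')| + |G (y, Function.update x' k a)| := abs_sub _ _
                  _ ≤ B + B := add_le_add (hGB _) (hGB _)).abs)
              (integrable_const _) hptbd
          _ = c k.succ := by simp
      have hIH := IH (fun j => μ j.succ) (fun j => hμ j.succ) g hgmeas
        (fun j => c j.succ) hgbd s
      rw [← hνs, ← hmg] at hIH
      have hIH2 : ∫ x', Real.exp (s * (g x' - m)) ∂νs
          ≤ Real.exp (s ^ 2 * (∑ j : Fin n, c j.succ ^ 2) / 8) := hIH
      clear hIH
      -- integrability of the two outer integrands
      have hout1 : Integrable (fun x' => ∫ y, Real.exp (s * (G (y, x') - m)) ∂ν0) νs :=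
        hEint.integral_prod_right
      have hout2 : Integrable
          (fun x' => Real.exp (s * (g x' - m)) * Real.exp (s ^ 2 * (c 0) ^ 2 / 8)) νs := by
        apply Integrable.mul_const
        refine mcd_integrable _ (by fun_prop) (C := Real.exp (|s| * (B + B))) fun x' => ?_
        refine mcd_exp_bound ?_
        calc |g x' - m| ≤ |g x'| + |m| := abs_sub _ _
          _ ≤ B + B := add_le_add (hgB x') hmB
      have houtint : Integrable (fun x' => Real.exp (s * (g x' - m))) νs := by
        refine mcd_integrable _ (by fun_prop) (C := Real.exp (|s| * (B + B))) fun x' => ?_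
        refine mcd_exp_bound ?_
        calc |g x' - m| ≤ |g x'| + |m| := abs_sub _ _
          _ ≤ B + B := add_le_add (hgB x') hmB
      calc ∫ x, Real.exp (s * (f x - m)) ∂(Measure.pi μ)
          = ∫ x', ∫ y, Real.exp (s * (G (y, x') - m)) ∂ν0 ∂νs := hmain
        _ ≤ ∫ x', Real.exp (s * (g x' - m)) * Real.exp (s ^ 2 * (c 0) ^ 2 / 8) ∂νs :=
            integral_mono hout1 hout2 hinner
        _ = (∫ x', Real.exp (s * (g x' - m)) ∂νs) * Real.exp (s ^ 2 * (c 0) ^ 2 / 8) :=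
            integral_mul_const _ _
        _ ≤ Real.exp (s ^ 2 * (∑ j : Fin n, c j.succ ^ 2) / 8) * Real.exp (s ^ 2 * (c 0) ^ 2 / 8) :=
            mul_le_mul_of_nonneg_right hIH2 (Real.exp_pos _).le
        _ = Real.exp (s ^ 2 * (∑ i, c i ^ 2) / 8) := by
            rw [← Real.exp_add]
            congr 1
            rw [Fin.sum_univ_succ]
            ring

/-- One-sided Chernoff bound from an MGF bound. -/
lemma mcd_tail {α : Type*} [MeasurableSpace α] (ν : Measure α) [IsProbabilityMeasure ν]
    (Z : α → ℝ) (hZ : Measurable Z) {C : ℝ} (hC : ∀ x, |Z x| ≤ C)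
    (K : ℝ) (hK : 0 < K)
    (hMGF : ∀ s : ℝ, ∫ x, Real.exp (s * Z x) ∂ν ≤ Real.exp (s ^ 2 * K / 8))
    (t : ℝ) (ht : 0 < t) :
    ν {x | t ≤ Z x} ≤ ENNReal.ofReal (Real.exp (-2 * t ^ 2 / K)) := by
  set s : ℝ := 4 * t / K with hs
  have hs0 : 0 < s := by positivity
  have hsub : {x | t ≤ Z x} ⊆ {x | (1 : ℝ) ≤ Real.exp (s * (Z x - t))} := by
    intro x hx
    exact Real.one_le_exp (mul_nonneg hs0.le (sub_nonneg.mpr hx))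
  have hint : Integrable (fun x => Real.exp (s * (Z x - t))) ν := by
    refine mcd_integrable _ (by fun_prop) (C := Real.exp (|s| * (C + |t|))) fun x => ?_
    refine mcd_exp_bound ?_
    calc |Z x - t| ≤ |Z x| + |t| := abs_sub _ _
      _ ≤ C + |t| := add_le_add_left (hC x) _
  have hMarkov := mul_meas_ge_le_integral_of_nonneg
    (ae_of_all ν fun x => (Real.exp_pos (s * (Z x - t))).le) hint 1
  have hIval : ∫ x, Real.exp (s * (Z x - t)) ∂ν ≤ Real.exp (-2 * t ^ 2 / K) := by
    have hsplit : ∀ x, Real.exp (s * (Z x - t)) = Real.exp (-(s * t)) * Real.exp (s * Z x) := by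
      intro x
      rw [← Real.exp_add]
      congr 1
      ring
    calc ∫ x, Real.exp (s * (Z x - t)) ∂ν
        = Real.exp (-(s * t)) * ∫ x, Real.exp (s * Z x) ∂ν := by
          rw [← integral_const_mul]
          exact integral_congr_ae (ae_of_all _ hsplit)
      _ ≤ Real.exp (-(s * t)) * Real.exp (s ^ 2 * K / 8) :=
          mul_le_mul_of_nonneg_left (hMGF s) (Real.exp_pos _).le
      _ = Real.exp (-2 * t ^ 2 / K) := by
          rw [← Real.exp_add]
          congr 1
          rw [hs]
          field_simp
          ring
  calc ν {x | t ≤ Z x} ≤ ν {x | (1 : ℝ) ≤ Real.exp (s * (Z x - t))} := measure_mono hsub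
    _ = ENNReal.ofReal ((ν {x | (1 : ℝ) ≤ Real.exp (s * (Z x - t))}).toReal) :=
        (ENNReal.ofReal_toReal (measure_ne_top ν _)).symm
    _ ≤ ENNReal.ofReal (Real.exp (-2 * t ^ 2 / K)) := by
        apply ENNReal.ofReal_le_ofReal
        have := hMarkov
        rw [one_mul] at this
        exact this.trans hIval

/-- The joint law of independent random variables is the product of the laws. -/
lemma mcd_map_pi {Ω A : Type*} [MeasurableSpace Ω] [MeasurableSpace A]
    (μ : Measure Ω) [IsProbabilityMeasure μ] {n : ℕ}
    (X : Fin n → Ω → A) (hXmeas : ∀ i, Measurable (X i))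
    (hindep : iIndepFun X μ) :
    μ.map (fun ω i => X i ω) = Measure.pi (fun i => μ.map (X i)) := by
  haveI : ∀ i, IsProbabilityMeasure (μ.map (X i)) := fun i =>
    Measure.isProbabilityMeasure_map (hXmeas i).aemeasurable
  refine (Measure.pi_eq fun s hs => ?_).symm
  rw [Measure.map_apply (measurable_pi_lambda _ fun i => hXmeas i)
    (MeasurableSet.univ_pi hs)]
  have hpre : (fun ω i => X i ω) ⁻¹' Set.pi Set.univ s = ⋂ i ∈ Finset.univ, X i ⁻¹' s i := by
    ext ω
    simp [Set.mem_pi]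
  rw [hpre, hindep.measure_inter_preimage_eq_mul Finset.univ (fun i _ => hs i)]
  exact Finset.prod_congr rfl fun i _ =>
    (Measure.map_apply (hXmeas i) (hs i)).symm

/-- McDiarmid's (bounded difference) inequality: if `f` satisfies the bounded
difference condition with constants `c k` and `X_1, …, X_n` are independent, then
`P(|f(X) - E f(X)| ≥ t) ≤ 2 exp(-2t²/∑ c_i²)`. -/
theorem mcdiarmid_inequality {Ω A : Type*} [MeasurableSpace Ω] [MeasurableSpace A]
    (μ : Measure Ω) [IsProbabilityMeasure μ] {n : ℕ}
    (X : Fin n → Ω → A) (hXmeas : ∀ i, Measurable (X i))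
    (hindep : iIndepFun X μ)
    (f : (Fin n → A) → ℝ) (hf : Measurable f) (c : Fin n → ℝ)
    (hbd : ∀ (k : Fin n) (x : Fin n → A) (x' : A),
      |f x - f (Function.update x k x')| ≤ c k)
    (t : ℝ) (ht : 0 < t) :
    μ {ω | t ≤ |f (fun i => X i ω) - ∫ ω', f (fun i => X i ω') ∂μ|}
      ≤ ENNReal.ofReal (2 * Real.exp (-2 * t ^ 2 / ∑ i, c i ^ 2)) := by
  classical
  haveI : ∀ i, IsProbabilityMeasure (μ.map (X i)) := fun i =>
    Measure.isProbabilityMeasure_map (hXmeas i).aemeasurable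
  set ν : Measure (Fin n → A) := Measure.pi (fun i => μ.map (X i)) with hν
  haveI : IsProbabilityMeasure ν := inferInstance
  have hmap : μ.map (fun ω i => X i ω) = ν := mcd_map_pi μ X hXmeas hindep
  have hTmeas : Measurable (fun ω i => X i ω) := measurable_pi_lambda _ fun i => hXmeas i
  have hm : ∫ ω', f (fun i => X i ω') ∂μ = ∫ x, f x ∂ν := by
    rw [← hmap, integral_map hTmeas.aemeasurable hf.aestronglyMeasurable]
  set m : ℝ := ∫ x, f x ∂ν with hmdef
  rw [hm]
  have hset : MeasurableSet {x : Fin n → A | t ≤ |f x - m|} :=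
    measurableSet_le measurable_const ((hf.sub measurable_const).abs)
  have hev : μ {ω | t ≤ |f (fun i => X i ω) - m|} = ν {x | t ≤ |f x - m|} := by
    rw [← hmap, Measure.map_apply hTmeas hset]
    rfl
  rw [hev]
  -- nonnegativity of the constants
  have hnepi : Nonempty (Fin n → A) := Measure.nonempty_of_neZero ν
  obtain ⟨x₀⟩ := hnepi
  have hc0 : ∀ k, 0 ≤ c k := by
    intro k
    have := hbd k x₀ (x₀ k)
    rwa [Function.update_eq_self, sub_self, abs_zero] at this
  set K : ℝ := ∑ i, c i ^ 2 with hKdef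
  have hK0 : 0 ≤ K := Finset.sum_nonneg fun i _ => sq_nonneg _
  rcases eq_or_lt_of_le hK0 with hK | hK
  · -- degenerate case: the right-hand side is at least 1
    rw [← hK, div_zero, Real.exp_zero, mul_one]
    calc ν {x | t ≤ |f x - m|} ≤ 1 := prob_le_one
      _ ≤ ENNReal.ofReal 2 := by
          rw [show (1 : ENNReal) = ENNReal.ofReal 1 by simp]
          exact ENNReal.ofReal_le_ofReal one_le_two
  · -- main case
    have hMGF : ∀ s : ℝ, ∫ x, Real.exp (s * (f x - m)) ∂ν ≤ Real.exp (s ^ 2 * K / 8) :=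
      fun s => mcd_mgf n (fun i => μ.map (X i)) (fun i => inferInstance) f hf c hbd s
    -- boundedness of f - m
    set B : ℝ := |f x₀| + ∑ i, c i with hB
    have hfB : ∀ x, |f x| ≤ B := by
      intro x
      calc |f x| ≤ |f x₀| + |f x - f x₀| := by
            have := abs_add_le (f x₀) (f x - f x₀); simpa using this
        _ ≤ B := add_le_add_right (mcd_bdd f c hbd x x₀) _
    have hmB : |m| ≤ B := by
      rw [hmdef]
      calc |∫ x, f x ∂ν| ≤ ∫ x, |f x| ∂ν := mcd_abs_int _ _
        _ ≤ ∫ _, B ∂ν := integral_mono ((mcd_integrable _ hf hfB).abs)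
            (integrable_const B) hfB
        _ = B := by simp
    have hCbd : ∀ x, |f x - m| ≤ B + B := fun x =>
      (abs_sub _ _).trans (add_le_add (hfB x) hmB)
    -- upper tail
    have hup : ν {x | t ≤ f x - m} ≤ ENNReal.ofReal (Real.exp (-2 * t ^ 2 / K)) :=
      mcd_tail ν (fun x => f x - m) (hf.sub measurable_const) hCbd K hK hMGF t ht
    -- lower tail
    have hlowMGF : ∀ s : ℝ, ∫ x, Real.exp (s * (m - f x)) ∂ν ≤ Real.exp (s ^ 2 * K / 8) := by
      intro s
      have h1 : ∀ x, Real.exp (s * (m - f x)) = Real.exp ((-s) * (f x - m)) := by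
        intro x; congr 1; ring
      calc ∫ x, Real.exp (s * (m - f x)) ∂ν
          = ∫ x, Real.exp ((-s) * (f x - m)) ∂ν :=
            integral_congr_ae (ae_of_all _ h1)
        _ ≤ Real.exp ((-s) ^ 2 * K / 8) := hMGF (-s)
        _ = Real.exp (s ^ 2 * K / 8) := by rw [neg_pow]; ring_nf
    have hCbd' : ∀ x, |m - f x| ≤ B + B := fun x => by
      rw [abs_sub_comm]; exact hCbd x
    have hlow : ν {x | t ≤ m - f x} ≤ ENNReal.ofReal (Real.exp (-2 * t ^ 2 / K)) :=
      mcd_tail ν (fun x => m - f x) (measurable_const.sub hf) hCbd' K hK hlowMGF t ht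
    -- union bound
    have hsub : {x | t ≤ |f x - m|} ⊆ {x | t ≤ f x - m} ∪ {x | t ≤ m - f x} := by
      intro x hx
      have hx' : t ≤ |f x - m| := hx
      rcases le_abs.1 hx' with h | h
      · exact Or.inl h
      · refine Or.inr ?_
        show t ≤ m - f x
        rw [← neg_sub (f x) m]
        exact h
    calc ν {x | t ≤ |f x - m|}
        ≤ ν ({x | t ≤ f x - m} ∪ {x | t ≤ m - f x}) := measure_mono hsub
      _ ≤ ν {x | t ≤ f x - m} + ν {x | t ≤ m - f x} := measure_union_le _ _
      _ ≤ ENNReal.ofReal (Real.exp (-2 * t ^ 2 / K))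
          + ENNReal.ofReal (Real.exp (-2 * t ^ 2 / K)) := add_le_add hup hlow
      _ = ENNReal.ofReal (2 * Real.exp (-2 * t ^ 2 / K)) := by
          rw [← ENNReal.ofReal_add (Real.exp_pos _).le (Real.exp_pos _).le]
          congr 1
          ring
end
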